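/- Let G be a well-tempered scoring game in J (gap_0(G)=0 and gap_1(G) ≤ 2) with gap_0(G)=0 and every subgame condition inherited, and suppose G is canonical (no subgame has dominated or reversible options). If G ≈ n for some integer n, then G is literally equal to the integer n. -/

import Mathlib

/-- Well-tempered scoring game trees: an integer (final score) or a position
with lists of Left and Right options. -/
inductive WT : Type where
  | int : ℤ → WT
  | node : List WT → List WT → WT

namespace WT

/-- Left options. -/
def lopts : WT → List WT
  | int _ => []
  | node L _ => L

/-- Right options. -/
def ropts : WT → List WT
  | int _ => []
  | node _ R => R

theorem sizeOf_lt_of_mem_lopts : ∀ {G g : WT}, g ∈ G.lopts → sizeOf g < sizeOf G := by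
  intro G g h
  cases G with
  | int n => simp [lopts] at h
  | node L R =>
    simp only [lopts] at h
    have h1 := List.sizeOf_lt_of_mem h
    have h2 : sizeOf (WT.node L R) = 1 + sizeOf L + sizeOf R := by simp
    omega

theorem sizeOf_lt_of_mem_ropts : ∀ {G g : WT}, g ∈ G.ropts → sizeOf g < sizeOf G := by
  intro G g h
  cases G with
  | int n => simp [ropts] at h
  | node L R =>
    simp only [ropts] at h
    have h1 := List.sizeOf_lt_of_mem h
    have h2 : sizeOf (WT.node L R) = 1 + sizeOf L + sizeOf R := by simp
    omega

/-- Disjunctive sum of two games. -/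
def add (G H : WT) : WT :=
  match G, H with
  | int m, int n => int (m + n)
  | G, H =>
    node ((G.lopts.attach.map fun g => add g.1 H) ++ (H.lopts.attach.map fun h => add G h.1))
         ((G.ropts.attach.map fun g => add g.1 H) ++ (H.ropts.attach.map fun h => add G h.1))
termination_by sizeOf G + sizeOf H
decreasing_by
  all_goals
    first
      | (have := sizeOf_lt_of_mem_lopts g.2; omega)
      | (have := sizeOf_lt_of_mem_lopts h.2; omega)
      | (have := sizeOf_lt_of_mem_ropts g.2; omega)
      | (have := sizeOf_lt_of_mem_ropts h.2; omega)

/-- Negation of a game: swap players and negate scores. -/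
def neg : WT → WT
  | int n => int (-n)
  | node L R =>
    node ((WT.node L R).ropts.attach.map fun g => neg g.1)
         ((WT.node L R).lopts.attach.map fun g => neg g.1)
termination_by G => sizeOf G
decreasing_by
  all_goals
    first
      | exact sizeOf_lt_of_mem_lopts g.2
      | exact sizeOf_lt_of_mem_ropts g.2

def lmax : List ℤ → ℤ
  | [] => 0
  | x :: xs => xs.foldl max x

def lmin : List ℤ → ℤ
  | [] => 0
  | x :: xs => xs.foldl min x

/-- The pair (left outcome, right outcome). -/
def out : WT → ℤ × ℤ
  | int n => (n, n)
  | node L R =>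
    (lmax ((WT.node L R).lopts.attach.map fun g => (out g.1).2),
     lmin ((WT.node L R).ropts.attach.map fun g => (out g.1).1))
termination_by G => sizeOf G
decreasing_by
  all_goals
    first
      | exact sizeOf_lt_of_mem_lopts g.2
      | exact sizeOf_lt_of_mem_ropts g.2

/-- Left outcome L(G): optimal score when Left moves first. -/
def Lout (G : WT) : ℤ := G.out.1

/-- Right outcome R(G): optimal score when Right moves first. -/
def Rout (G : WT) : ℤ := G.out.2

/-- `IsWT G p` : `G` is a well-tempered game of parity `p`
(`false` = even-tempered, `true` = odd-tempered). -/
inductive IsWT : WT → Bool → Prop where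
  | int (n : ℤ) : IsWT (WT.int n) false
  | node {L R : List WT} {p : Bool} (hL : L ≠ []) (hR : R ≠ [])
      (hLp : ∀ g ∈ L, IsWT g p) (hRp : ∀ g ∈ R, IsWT g p) :
      IsWT (WT.node L R) (!p)

/-- `G` is a well-tempered game (of some parity). -/
def Wt (G : WT) : Prop := ∃ p, IsWT G p

/-- Parity, computed structurally (`false` = even-tempered, `true` = odd-tempered;
agrees with `IsWT` on well-tempered games). -/
def par : WT → Bool
  | int _ => false
  | node [] _ => true
  | node (g :: _) _ => !(par g)

/-- Final score under optimal play when Left moves last. -/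
def Lf (G : WT) : ℤ := if G.par then G.Lout else G.Rout

/-- Final score under optimal play when Right moves last. -/
def Rf (G : WT) : ℤ := if G.par then G.Rout else G.Lout

/-- `G ≲ H` : for every well-tempered `X`, `L(G+X) ≤ L(H+X)` and `R(G+X) ≤ R(H+X)`. -/
def Le (G H : WT) : Prop :=
  ∀ X : WT, X.Wt → (G.add X).Lout ≤ (H.add X).Lout ∧ (G.add X).Rout ≤ (H.add X).Rout

/-- `G ≳ H`. -/
def Ge (G H : WT) : Prop := Le H G

/-- `G ≈ H` : equivalence of scoring games. -/
def Equiv (G H : WT) : Prop :=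
  ∀ X : WT, X.Wt → (G.add X).Lout = (H.add X).Lout ∧ (G.add X).Rout = (H.add X).Rout

/-- `G` and `H` are well-tempered with the same parity. -/
def SamePar (G H : WT) : Prop := ∃ p, IsWT G p ∧ IsWT H p

/-- `G` takes values in `S`: every integer subgame lies in `S`. -/
inductive Valued (S : Set ℤ) : WT → Prop where
  | int {n : ℤ} : n ∈ S → Valued S (WT.int n)
  | node {L R : List WT} : (∀ g ∈ L, Valued S g) → (∀ g ∈ R, Valued S g) →
      Valued S (WT.node L R)

/-- `Subgame H G` : `H` is a subgame of `G`. -/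
inductive Subgame : WT → WT → Prop where
  | refl (G : WT) : Subgame G G
  | left {H G' : WT} {L R : List WT} : G' ∈ L → Subgame H G' → Subgame H (WT.node L R)
  | right {H G' : WT} {L R : List WT} : G' ∈ R → Subgame H G' → Subgame H (WT.node L R)

/-- `gap G p` : supremum of `R(H) - L(H)` over subgames `H` of `G` of parity `p`
(as an element of `WithBot ℤ`; the supremum of the empty set is `⊥ = -∞`). -/
noncomputable def gap (G : WT) (p : Bool) : WithBot ℤ :=
  sSup {x : WithBot ℤ | ∃ H : WT, Subgame H G ∧ IsWT H p ∧ x = ((H.Rout - H.Lout : ℤ) : WithBot ℤ)}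

/-- Heating by `t`. -/
def heat (t : ℤ) : WT → WT
  | int n => int n
  | node L R =>
    node ((WT.node L R).lopts.attach.map fun g => (WT.int t).add (heat t g.1))
         ((WT.node L R).ropts.attach.map fun g => (WT.int (-t)).add (heat t g.1))
termination_by G => sizeOf G
decreasing_by
  all_goals
    first
      | exact sizeOf_lt_of_mem_lopts g.2
      | exact sizeOf_lt_of_mem_ropts g.2

end WT

namespace WT

/-- `G` has no dominated and no reversible Left or Right options. -/
def NoBad (G : WT) : Prop :=
  (∀ gl ∈ G.lopts,
      (¬ ∃ glr ∈ gl.ropts, Le glr G) ∧ ¬ ∃ gl' ∈ G.lopts, gl' ≠ gl ∧ Le gl gl') ∧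
  (∀ gr ∈ G.ropts,
      (¬ ∃ grl ∈ gr.lopts, Ge grl G) ∧ ¬ ∃ gr' ∈ G.ropts, gr' ≠ gr ∧ Ge gr gr')

/-- `G` is canonical: no subgame has dominated or reversible options. -/
def Canonical (G : WT) : Prop := ∀ H : WT, Subgame H G → NoBad H

end WT

namespace WT

/-! ### foldl max/min helpers -/

private theorem le_foldl_max : ∀ (l : List ℤ) (a x : ℤ), (x = a ∨ x ∈ l) → x ≤ l.foldl max a
  | [], _, _, h => by
    rcases h with h | h
    · exact h.le
    · simp at h
  | b :: t, a, x, h => by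
    simp only [List.foldl_cons]
    rcases h with h | h
    · subst h
      exact (le_max_left x b).trans (le_foldl_max t (max x b) (max x b) (Or.inl rfl))
    · rcases List.mem_cons.mp h with h | h
      · subst h
        exact (le_max_right a x).trans (le_foldl_max t (max a x) (max a x) (Or.inl rfl))
      · exact le_foldl_max t (max a b) x (Or.inr h)

private theorem foldl_max_le : ∀ (l : List ℤ) (a c : ℤ), a ≤ c → (∀ x ∈ l, x ≤ c) → l.foldl max a ≤ c
  | [], _, _, ha, _ => ha
  | b :: t, a, c, ha, h => by
    simp only [List.foldl_cons]
    exact foldl_max_le t (max a b) c (max_le ha (h b (by simp))) (fun x hx => h x (by simp [hx]))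

private theorem foldl_max_mem : ∀ (l : List ℤ) (a : ℤ), l.foldl max a = a ∨ l.foldl max a ∈ l
  | [], _ => Or.inl rfl
  | b :: t, a => by
    simp only [List.foldl_cons]
    rcases foldl_max_mem t (max a b) with h | h
    · rcases max_choice a b with h2 | h2
      · exact Or.inl (by rw [h, h2])
      · exact Or.inr (by rw [h, h2]; simp)
    · exact Or.inr (by simp [h])

private theorem foldl_min_le : ∀ (l : List ℤ) (a x : ℤ), (x = a ∨ x ∈ l) → l.foldl min a ≤ x
  | [], _, _, h => by
    rcases h with h | h
    · exact h.ge
    · simp at h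
  | b :: t, a, x, h => by
    simp only [List.foldl_cons]
    rcases h with h | h
    · subst h
      exact (foldl_min_le t (min x b) (min x b) (Or.inl rfl)).trans (min_le_left x b)
    · rcases List.mem_cons.mp h with h | h
      · subst h
        exact (foldl_min_le t (min a x) (min a x) (Or.inl rfl)).trans (min_le_right a x)
      · exact foldl_min_le t (min a b) x (Or.inr h)

private theorem le_foldl_min : ∀ (l : List ℤ) (a c : ℤ), c ≤ a → (∀ x ∈ l, c ≤ x) → c ≤ l.foldl min a
  | [], _, _, ha, _ => ha
  | b :: t, a, c, ha, h => by
    simp only [List.foldl_cons]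
    exact le_foldl_min t (min a b) c (le_min ha (h b (by simp))) (fun x hx => h x (by simp [hx]))

private theorem foldl_min_mem : ∀ (l : List ℤ) (a : ℤ), l.foldl min a = a ∨ l.foldl min a ∈ l
  | [], _ => Or.inl rfl
  | b :: t, a => by
    simp only [List.foldl_cons]
    rcases foldl_min_mem t (min a b) with h | h
    · rcases min_choice a b with h2 | h2
      · exact Or.inl (by rw [h, h2])
      · exact Or.inr (by rw [h, h2]; simp)
    · exact Or.inr (by simp [h])

private theorem foldl_max_add : ∀ (l : List ℤ) (a k : ℤ),
    (l.map (fun x => x + k)).foldl max (a + k) = l.foldl max a + k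
  | [], _, _ => rfl
  | b :: t, a, k => by
    simp only [List.map_cons, List.foldl_cons]
    rw [show max (a + k) (b + k) = max a b + k from max_add_add_right a b k]
    exact foldl_max_add t (max a b) k

private theorem foldl_min_add : ∀ (l : List ℤ) (a k : ℤ),
    (l.map (fun x => x + k)).foldl min (a + k) = l.foldl min a + k
  | [], _, _ => rfl
  | b :: t, a, k => by
    simp only [List.map_cons, List.foldl_cons]
    rw [show min (a + k) (b + k) = min a b + k from min_add_add_right a b k]
    exact foldl_min_add t (min a b) k

private theorem foldl_min_neg : ∀ (l : List ℤ) (a : ℤ),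
    l.foldl min a = -((l.map (fun x => -x)).foldl max (-a))
  | [], a => by simp
  | b :: t, a => by
    simp only [List.map_cons, List.foldl_cons]
    rw [foldl_min_neg t (min a b)]
    rw [show -min a b = max (-a) (-b) from by omega]

/-! ### lmax/lmin lemmas -/

theorem le_lmax {l : List ℤ} {x : ℤ} (h : x ∈ l) : x ≤ lmax l := by
  match l with
  | a :: t => exact le_foldl_max t a x (List.mem_cons.mp h)

theorem lmax_le {l : List ℤ} {c : ℤ} (hne : l ≠ []) (h : ∀ x ∈ l, x ≤ c) : lmax l ≤ c := by
  match l with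
  | [] => exact absurd rfl hne
  | a :: t => exact foldl_max_le t a c (h a (by simp)) (fun x hx => h x (by simp [hx]))

theorem lmax_mem {l : List ℤ} (hne : l ≠ []) : lmax l ∈ l := by
  match l with
  | a :: t =>
    show t.foldl max a ∈ a :: t
    rcases foldl_max_mem t a with h | h
    · rw [h]; simp
    · simp [h]

theorem lmin_le {l : List ℤ} {x : ℤ} (h : x ∈ l) : lmin l ≤ x := by
  match l with
  | a :: t => exact foldl_min_le t a x (List.mem_cons.mp h)

theorem le_lmin {l : List ℤ} {c : ℤ} (hne : l ≠ []) (h : ∀ x ∈ l, c ≤ x) : c ≤ lmin l := by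
  match l with
  | [] => exact absurd rfl hne
  | a :: t => exact le_foldl_min t a c (h a (by simp)) (fun x hx => h x (by simp [hx]))

theorem lmin_mem {l : List ℤ} (hne : l ≠ []) : lmin l ∈ l := by
  match l with
  | a :: t =>
    show t.foldl min a ∈ a :: t
    rcases foldl_min_mem t a with h | h
    · rw [h]; simp
    · simp [h]

theorem le_lmin0 {l : List ℤ} (h : ∀ x ∈ l, (0:ℤ) ≤ x) : 0 ≤ lmin l := by
  match l with
  | [] => exact le_refl 0
  | a :: t => exact le_foldl_min t a 0 (h a (by simp)) (fun x hx => h x (by simp [hx]))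

theorem lmax_add {l : List ℤ} (hne : l ≠ []) (k : ℤ) :
    lmax (l.map (fun x => x + k)) = lmax l + k := by
  match l with
  | [] => exact absurd rfl hne
  | a :: t =>
    show (t.map (fun x => x + k)).foldl max (a + k) = t.foldl max a + k
    exact foldl_max_add t a k

theorem lmin_add {l : List ℤ} (hne : l ≠ []) (k : ℤ) :
    lmin (l.map (fun x => x + k)) = lmin l + k := by
  match l with
  | [] => exact absurd rfl hne
  | a :: t =>
    show (t.map (fun x => x + k)).foldl min (a + k) = t.foldl min a + k
    exact foldl_min_add t a k

theorem lmin_eq_neg_lmax (l : List ℤ) : lmin l = -lmax (l.map (fun x => -x)) := by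
  match l with
  | [] => simp [lmin, lmax]
  | a :: t =>
    show t.foldl min a = -((t.map (fun x => -x)).foldl max (-a))
    exact foldl_min_neg t a

/-! ### structural lemmas -/

theorem add_int_int (m k : ℤ) : (int m).add (int k) = int (m + k) := by
  simp [add]

theorem add_node_left (L R : List WT) (X : WT) :
    (node L R).add X =
      node (L.map (fun g => g.add X) ++ X.lopts.map (fun x => (node L R).add x))
           (R.map (fun g => g.add X) ++ X.ropts.map (fun x => (node L R).add x)) := by
  rw [add]
  · simp [lopts, ropts, List.attach_map_val]
  · intro m k h; cases h

theorem add_node_right (G : WT) (L R : List WT) :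
    G.add (node L R) =
      node (G.lopts.map (fun g => g.add (node L R)) ++ L.map (fun x => G.add x))
           (G.ropts.map (fun g => g.add (node L R)) ++ R.map (fun x => G.add x)) := by
  rw [add]
  · simp [lopts, ropts, List.attach_map_val]
  · intro m k _ h; cases h

theorem out_node (L R : List WT) :
    (node L R).out = (lmax (L.map fun g => g.out.2), lmin (R.map fun g => g.out.1)) := by
  rw [out]
  rw [List.attach_map_val (l := lopts (node L R)) (f := fun g => (out g).2),
      List.attach_map_val (l := ropts (node L R)) (f := fun g => (out g).1)]
  rfl

theorem neg_node (L R : List WT) : (node L R).neg = node (R.map neg) (L.map neg) := by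
  rw [neg]
  rw [List.attach_map_val (l := ropts (node L R)) (f := neg), List.attach_map_val (l := lopts (node L R)) (f := neg)]
  rfl

theorem neg_int (m : ℤ) : (int m).neg = int (-m) := by rw [neg]

theorem out_int (m : ℤ) : (int m).out = (m, m) := by rw [out]

theorem Lout_int (m : ℤ) : (int m).Lout = m := by rw [Lout, out_int]

theorem Rout_int (m : ℤ) : (int m).Rout = m := by rw [Rout, out_int]

theorem Lout_node (L R : List WT) : (node L R).Lout = lmax (L.map Rout) := by
  rw [Lout, out_node]; rfl

theorem Rout_node (L R : List WT) : (node L R).Rout = lmin (R.map Lout) := by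
  rw [Rout, out_node]; rfl

/-! ### custom induction -/

@[elab_as_elim]
theorem rec' {motive : WT → Prop} (hi : ∀ n, motive (int n))
    (hn : ∀ L R, (∀ g ∈ L, motive g) → (∀ g ∈ R, motive g) → motive (node L R)) :
    ∀ G, motive G
  | int n => hi n
  | node L R =>
    hn L R (fun g hg => rec' hi hn g) (fun g hg => rec' hi hn g)
termination_by G => sizeOf G
decreasing_by
  all_goals
    (have h1 := List.sizeOf_lt_of_mem hg
     have h2 : sizeOf (WT.node L R) = 1 + sizeOf L + sizeOf R := by simp
     omega)

/-! ### IsWT inversions -/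

theorem int_inv {n : ℤ} {p : Bool} (h : IsWT (int n) p) : p = false := by
  cases h; rfl

theorem node_inv {L R : List WT} {p : Bool} (h : IsWT (node L R) p) :
    L ≠ [] ∧ R ≠ [] ∧ (∀ g ∈ L, IsWT g (!p)) ∧ (∀ g ∈ R, IsWT g (!p)) := by
  cases h with
  | node hL hR hLp hRp =>
    refine ⟨hL, hR, fun g hg => ?_, fun g hg => ?_⟩
    · simpa using hLp g hg
    · simpa using hRp g hg

theorem wt_of_mem_lopts {X x : WT} {q : Bool} (hq : IsWT X q) (hx : x ∈ X.lopts) :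
    IsWT x (!q) := by
  cases X with
  | int m => simp [lopts] at hx
  | node L R => exact (node_inv hq).2.2.1 x hx

theorem wt_of_mem_ropts {X x : WT} {q : Bool} (hq : IsWT X q) (hx : x ∈ X.ropts) :
    IsWT x (!q) := by
  cases X with
  | int m => simp [ropts] at hx
  | node L R => exact (node_inv hq).2.2.2 x hx

theorem IsWT_neg {G : WT} {p : Bool} (h : IsWT G p) : IsWT G.neg p := by
  induction h with
  | int n => rw [neg_int]; exact IsWT.int (-n)
  | node hL hR hLp hRp ihL ihR =>
    rw [neg_node]
    refine IsWT.node (by simpa using hR) (by simpa using hL) ?_ ?_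
    · intro g hg
      obtain ⟨g', hg', rfl⟩ := List.mem_map.mp hg
      exact ihR g' hg'
    · intro g hg
      obtain ⟨g', hg', rfl⟩ := List.mem_map.mp hg
      exact ihL g' hg'

/-! ### sum membership and outcome bounds -/

theorem sum_lopts_left {G X g : WT} (hg : g ∈ G.lopts) : g.add X ∈ (G.add X).lopts := by
  cases G with
  | int m => simp [lopts] at hg
  | node L R =>
    rw [add_node_left]
    exact List.mem_append_left _ (List.mem_map.mpr ⟨g, hg, rfl⟩)

theorem sum_lopts_right {G X x : WT} (hx : x ∈ X.lopts) : G.add x ∈ (G.add X).lopts := by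
  cases X with
  | int m => simp [lopts] at hx
  | node L R =>
    rw [add_node_right]
    exact List.mem_append_right _ (List.mem_map.mpr ⟨x, hx, rfl⟩)

theorem sum_ropts_left {G X g : WT} (hg : g ∈ G.ropts) : g.add X ∈ (G.add X).ropts := by
  cases G with
  | int m => simp [ropts] at hg
  | node L R =>
    rw [add_node_left]
    exact List.mem_append_left _ (List.mem_map.mpr ⟨g, hg, rfl⟩)

theorem sum_ropts_right {G X x : WT} (hx : x ∈ X.ropts) : G.add x ∈ (G.add X).ropts := by
  cases X with
  | int m => simp [ropts] at hx
  | node L R =>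
    rw [add_node_right]
    exact List.mem_append_right _ (List.mem_map.mpr ⟨x, hx, rfl⟩)

theorem le_Lout_of_mem_lopts {G g : WT} (h : g ∈ G.lopts) : g.Rout ≤ G.Lout := by
  cases G with
  | int m => simp [lopts] at h
  | node L R =>
    rw [Lout_node]
    exact le_lmax (List.mem_map.mpr ⟨g, h, rfl⟩)

theorem Rout_le_of_mem_ropts {G g : WT} (h : g ∈ G.ropts) : G.Rout ≤ g.Lout := by
  cases G with
  | int m => simp [ropts] at h
  | node L R =>
    rw [Rout_node]
    exact lmin_le (List.mem_map.mpr ⟨g, h, rfl⟩)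

theorem Lout_add_le {G X : WT} {c : ℤ} (hne : G.lopts ≠ [] ∨ X.lopts ≠ [])
    (h1 : ∀ g ∈ G.lopts, (g.add X).Rout ≤ c) (h2 : ∀ x ∈ X.lopts, (G.add x).Rout ≤ c) :
    (G.add X).Lout ≤ c := by
  have key : ∀ (A B : List WT),
      G.add X = node A B →
      A = G.lopts.map (fun g => g.add X) ++ X.lopts.map (fun x => G.add x) →
      (G.add X).Lout ≤ c := by
    intro A B hAB hA
    rw [hAB, Lout_node, hA]
    apply lmax_le
    · rcases hne with h | h
      · obtain ⟨a, ha⟩ := List.exists_mem_of_ne_nil _ h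
        exact List.ne_nil_of_mem (List.mem_map.mpr ⟨_, List.mem_append_left _
          (List.mem_map.mpr ⟨a, ha, rfl⟩), rfl⟩)
      · obtain ⟨a, ha⟩ := List.exists_mem_of_ne_nil _ h
        exact List.ne_nil_of_mem (List.mem_map.mpr ⟨_, List.mem_append_right _
          (List.mem_map.mpr ⟨a, ha, rfl⟩), rfl⟩)
    · intro y hy
      simp only [List.map_append, List.map_map, List.mem_append, List.mem_map,
        Function.comp] at hy
      rcases hy with ⟨a, ha, rfl⟩ | ⟨a, ha, rfl⟩
      · exact h1 a ha
      · exact h2 a ha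
  cases G with
  | int m =>
    cases X with
    | int k => simp [lopts] at hne
    | node XL XR => exact key _ _ (add_node_right _ _ _) (by simp [lopts, ropts])
  | node L R => exact key _ _ (add_node_left _ _ _) rfl

theorem le_Rout_add {G X : WT} {c : ℤ} (hne : G.ropts ≠ [] ∨ X.ropts ≠ [])
    (h1 : ∀ g ∈ G.ropts, c ≤ (g.add X).Lout) (h2 : ∀ x ∈ X.ropts, c ≤ (G.add x).Lout) :
    c ≤ (G.add X).Rout := by
  have key : ∀ (A B : List WT),
      G.add X = node A B →
      B = G.ropts.map (fun g => g.add X) ++ X.ropts.map (fun x => G.add x) →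
      c ≤ (G.add X).Rout := by
    intro A B hAB hB
    rw [hAB, Rout_node, hB]
    apply le_lmin
    · rcases hne with h | h
      · obtain ⟨a, ha⟩ := List.exists_mem_of_ne_nil _ h
        exact List.ne_nil_of_mem (List.mem_map.mpr ⟨_, List.mem_append_left _
          (List.mem_map.mpr ⟨a, ha, rfl⟩), rfl⟩)
      · obtain ⟨a, ha⟩ := List.exists_mem_of_ne_nil _ h
        exact List.ne_nil_of_mem (List.mem_map.mpr ⟨_, List.mem_append_right _
          (List.mem_map.mpr ⟨a, ha, rfl⟩), rfl⟩)
    · intro y hy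
      simp only [List.map_append, List.map_map, List.mem_append, List.mem_map,
        Function.comp] at hy
      rcases hy with ⟨a, ha, rfl⟩ | ⟨a, ha, rfl⟩
      · exact h1 a ha
      · exact h2 a ha
  cases G with
  | int m =>
    cases X with
    | int k => simp [ropts] at hne
    | node XL XR => exact key _ _ (add_node_right _ _ _) (by simp [lopts, ropts])
  | node L R => exact key _ _ (add_node_left _ _ _) rfl

theorem exists_lopts (G : WT) (h : G.lopts ≠ []) : ∃ g ∈ G.lopts, G.Lout ≤ g.Rout := by
  cases G with
  | int m => simp [lopts] at h
  | node L R =>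
    have hne : L.map Rout ≠ [] := by
      simp only [ne_eq, List.map_eq_nil_iff]
      exact h
    obtain ⟨g, hg, heq⟩ := List.mem_map.mp (lmax_mem hne)
    exact ⟨g, hg, by rw [Lout_node, heq]⟩

theorem exists_ropts (G : WT) (h : G.ropts ≠ []) : ∃ g ∈ G.ropts, g.Lout ≤ G.Rout := by
  cases G with
  | int m => simp [ropts] at h
  | node L R =>
    have hne : R.map Lout ≠ [] := by
      simp only [ne_eq, List.map_eq_nil_iff]
      exact h
    obtain ⟨g, hg, heq⟩ := List.mem_map.mp (lmin_mem hne)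
    exact ⟨g, hg, by rw [Rout_node, heq]⟩

end WT

namespace WT

/-! ### outcomes of translation and negation -/

theorem out_add_int {G : WT} {p : Bool} (h : IsWT G p) (k : ℤ) :
    (G.add (int k)).Lout = G.Lout + k ∧ (G.add (int k)).Rout = G.Rout + k := by
  induction h with
  | int m => rw [add_int_int]; simp [Lout_int, Rout_int]
  | @node L R p hL hR hLp hRp ihL ihR =>
    rw [add_node_left]
    simp only [lopts, ropts, List.map_nil, List.append_nil]
    constructor
    · rw [Lout_node, Lout_node, List.map_map]
      rw [List.map_congr_left (fun g hg => show (Rout ∘ fun g => g.add (int k)) g = (Rout g) + k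
        from (ihL g hg).2)]
      rw [show L.map (fun g => g.Rout + k) = (L.map Rout).map (fun x => x + k) from by
        rw [List.map_map]; rfl]
      exact lmax_add (by simpa using hL) k
    · rw [Rout_node, Rout_node, List.map_map]
      rw [List.map_congr_left (fun g hg => show (Lout ∘ fun g => g.add (int k)) g = (Lout g) + k
        from (ihR g hg).1)]
      rw [show R.map (fun g => g.Lout + k) = (R.map Lout).map (fun x => x + k) from by
        rw [List.map_map]; rfl]
      exact lmin_add (by simpa using hR) k

theorem out_int_add {G : WT} {p : Bool} (h : IsWT G p) (k : ℤ) :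
    ((int k).add G).Lout = G.Lout + k ∧ ((int k).add G).Rout = G.Rout + k := by
  induction h with
  | int m => rw [add_int_int]; simp [Lout_int, Rout_int]; omega
  | @node L R p hL hR hLp hRp ihL ihR =>
    rw [add_node_right]
    simp only [lopts, ropts, List.map_nil, List.nil_append]
    constructor
    · rw [Lout_node, Lout_node, List.map_map]
      rw [List.map_congr_left (fun g hg => show (Rout ∘ fun g => (int k).add g) g = (Rout g) + k
        from (ihL g hg).2)]
      rw [show L.map (fun g => g.Rout + k) = (L.map Rout).map (fun x => x + k) from by
        rw [List.map_map]; rfl]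
      exact lmax_add (by simpa using hL) k
    · rw [Rout_node, Rout_node, List.map_map]
      rw [List.map_congr_left (fun g hg => show (Lout ∘ fun g => (int k).add g) g = (Lout g) + k
        from (ihR g hg).1)]
      rw [show R.map (fun g => g.Lout + k) = (R.map Lout).map (fun x => x + k) from by
        rw [List.map_map]; rfl]
      exact lmin_add (by simpa using hR) k

theorem out_neg : ∀ G : WT, G.neg.Lout = -G.Rout ∧ G.neg.Rout = -G.Lout := by
  intro G
  induction G using rec' with
  | hi m => rw [neg_int]; simp [Lout_int, Rout_int]
  | hn L R ihL ihR =>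
    rw [neg_node]
    constructor
    · rw [Lout_node, Rout_node, List.map_map]
      rw [List.map_congr_left (fun g hg => show (Rout ∘ neg) g = -(Lout g) from (ihR g hg).2)]
      rw [lmin_eq_neg_lmax, List.map_map, neg_neg]
      rfl
    · rw [Rout_node, Lout_node, List.map_map]
      rw [List.map_congr_left (fun g hg => show (Lout ∘ neg) g = -(Rout g) from (ihL g hg).1)]
      rw [lmin_eq_neg_lmax, List.map_map]
      exact congrArg (fun t => -lmax t) (List.map_congr_left fun g _ => neg_neg _)

/-! ### mirror strategy -/

theorem mirror : ∀ G : WT, (0:ℤ) ≤ (G.add G.neg).Rout := by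
  intro G
  induction G using rec' with
  | hi m => rw [neg_int, add_int_int]; simp [Rout_int]
  | hn L R ihL ihR =>
    rw [neg_node, add_node_left, Rout_node]
    apply le_lmin0
    intro y hy
    simp only [List.map_append, List.map_map, List.mem_append, List.mem_map, ropts, lopts,
      Function.comp] at hy
    rcases hy with ⟨g, hg, rfl⟩ | ⟨x, hx, rfl⟩
    · -- Right moved in the left component to g ∈ R
      have hmem : g.neg ∈ (node (R.map neg) (L.map neg)).lopts :=
        List.mem_map.mpr ⟨g, hg, rfl⟩
      exact (ihR g hg).trans (le_Lout_of_mem_lopts (sum_lopts_right hmem))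
    · -- Right moved in the negative component
      have hmem : x ∈ (node L R).lopts := hx
      exact (ihL x hx).trans (le_Lout_of_mem_lopts (sum_lopts_left hmem))

/-! ### subgames and the gap condition -/

theorem subgame_trans {A B C : WT} (h1 : Subgame A B) (h2 : Subgame B C) : Subgame A C := by
  induction h2 with
  | refl => exact h1
  | left hm _ ih => exact Subgame.left hm ih
  | right hm _ ih => exact Subgame.right hm ih

theorem subgame_int {H : WT} {m : ℤ} (h : Subgame H (int m)) : H = int m := by
  cases h with
  | refl => rfl

theorem subgame_finite : ∀ G : WT, {H | Subgame H G}.Finite := by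
  intro G
  induction G using rec' with
  | hi m =>
    exact (Set.finite_singleton (int m)).subset (fun H h => subgame_int h)
  | hn L R ihL ihR =>
    have hfin : (insert (node L R) ((⋃ g ∈ {x | x ∈ L}, {H | Subgame H g}) ∪
        ⋃ g ∈ {x | x ∈ R}, {H | Subgame H g})).Finite := by
      apply Set.Finite.insert
      apply Set.Finite.union
      · exact Set.Finite.biUnion (List.finite_toSet L) (fun g hg => ihL g hg)
      · exact Set.Finite.biUnion (List.finite_toSet R) (fun g hg => ihR g hg)
    apply hfin.subset
    intro H h
    cases h with
    | refl => exact Set.mem_insert _ _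
    | left hm hs => exact Set.mem_insert_of_mem _ (Or.inl (Set.mem_biUnion hm hs))
    | right hm hs => exact Set.mem_insert_of_mem _ (Or.inr (Set.mem_biUnion hm hs))

theorem even_gap {G : WT} (h0 : G.gap false = ((0:ℤ) : WithBot ℤ)) :
    ∀ K, Subgame K G → IsWT K false → K.Rout ≤ K.Lout := by
  intro K hs hw
  set S : Set (WithBot ℤ) :=
    {x | ∃ H, Subgame H G ∧ IsWT H false ∧ x = ((H.Rout - H.Lout : ℤ) : WithBot ℤ)} with hS
  have hsub : S ⊆ (fun H : WT => ((H.Rout - H.Lout : ℤ) : WithBot ℤ)) '' {H | Subgame H G} := by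
    rintro x ⟨H, h1, _, rfl⟩
    exact ⟨H, h1, rfl⟩
  have hb : BddAbove S :=
    Set.Finite.bddAbove (Set.Finite.subset (Set.Finite.image _ (subgame_finite G)) hsub)
  have hmem : ((K.Rout - K.Lout : ℤ) : WithBot ℤ) ∈ S := ⟨K, hs, hw, rfl⟩
  have hle := le_csSup hb hmem
  have h0' : sSup S = ((0:ℤ) : WithBot ℤ) := h0
  rw [h0'] at hle
  have := WithBot.coe_le_coe.mp hle
  omega

end WT

namespace WT

/-! ### the key comparison lemma with an integer -/

theorem pq_aux (n : ℤ) (N : ℕ) : ∀ (H X : WT), sizeOf H + sizeOf X ≤ N →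
    (∀ K, Subgame K H → IsWT K false → K.Rout ≤ K.Lout) → X.Wt →
    ((IsWT H false → H.Lout ≤ n →
      (H.add X).Lout ≤ n + X.Lout ∧ (H.add X).Rout ≤ n + X.Rout) ∧
    (IsWT H true → H.Rout ≤ n → (H.add X).Rout ≤ n + X.Lout)) := by
  induction N using Nat.strong_induction_on with
  | _ N ih =>
  intro H X hsz hgap hX
  obtain ⟨q, hq⟩ := hX
  constructor
  · intro hHe hLn
    cases H with
    | int m =>
      rw [Lout_int] at hLn
      cases X with
      | int k =>
        rw [add_int_int]
        constructor
        · rw [Lout_int, Lout_int]; omega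
        · rw [Rout_int, Rout_int]; omega
      | node XL XR =>
        obtain ⟨hXL, hXR, _, _⟩ := node_inv hq
        constructor
        · apply Lout_add_le (G := int m) (X := node XL XR) (Or.inr hXL)
          · intro g hg; simp [lopts] at hg
          · intro x hx
            have hxw : IsWT x (!q) := wt_of_mem_lopts hq hx
            have hs1 : sizeOf x < sizeOf (node XL XR) := sizeOf_lt_of_mem_lopts hx
            have ih := ((ih (sizeOf (int m) + sizeOf x) (by omega) (int m) x le_rfl hgap ⟨!q, hxw⟩).1 hHe (by rw [Lout_int]; omega)).2
            have h2 := le_Lout_of_mem_lopts hx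
            omega
        · obtain ⟨xr, hxr, hxrle⟩ := exists_ropts (node XL XR) hXR
          have hxw : IsWT xr (!q) := wt_of_mem_ropts hq hxr
          have hs1 : sizeOf xr < sizeOf (node XL XR) := sizeOf_lt_of_mem_ropts hxr
          have ih := ((ih (sizeOf (int m) + sizeOf xr) (by omega) (int m) xr le_rfl hgap ⟨!q, hxw⟩).1 hHe (by rw [Lout_int]; omega)).1
          have h2 := Rout_le_of_mem_ropts (sum_ropts_right (G := int m) hxr)
          omega
    | node L R =>
      obtain ⟨hLne, hRne, hLo, hRo⟩ := node_inv hHe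
      constructor
      · apply Lout_add_le (G := node L R) (X := X) (Or.inl hLne)
        · intro g hg
          have hgo : IsWT g true := by simpa using hLo g hg
          have hgap' : ∀ K, Subgame K g → IsWT K false → K.Rout ≤ K.Lout :=
            fun K hK hKe => hgap K (subgame_trans hK (Subgame.left hg (Subgame.refl g))) hKe
          have hs1 : sizeOf g < sizeOf (node L R) := sizeOf_lt_of_mem_lopts hg
          have hRg : g.Rout ≤ n := le_trans (le_Lout_of_mem_lopts hg) hLn
          exact (ih (sizeOf g + sizeOf X) (by omega) g X le_rfl hgap' ⟨q, hq⟩).2 hgo hRg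
        · intro x hx
          have hxw : IsWT x (!q) := wt_of_mem_lopts hq hx
          have hs1 : sizeOf x < sizeOf X := sizeOf_lt_of_mem_lopts hx
          have ih := ((ih (sizeOf (node L R) + sizeOf x) (by omega) (node L R) x le_rfl hgap ⟨!q, hxw⟩).1 hHe hLn).2
          have h2 := le_Lout_of_mem_lopts hx
          omega
      · cases X with
        | int k =>
          obtain ⟨hr, hhr, hhrle⟩ := exists_ropts (node L R) hRne
          have hhro : IsWT hr true := by simpa using hRo hr hhr
          have hsl := hgap _ (Subgame.refl _) hHe
          have h2 := Rout_le_of_mem_ropts (sum_ropts_left (X := int k) hhr)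
          have h3 := (out_add_int hhro k).1
          rw [Rout_int]
          omega
        | node XL XR =>
          obtain ⟨hXL, hXR, _, _⟩ := node_inv hq
          obtain ⟨xr, hxr, hxrle⟩ := exists_ropts (node XL XR) hXR
          have hxw : IsWT xr (!q) := wt_of_mem_ropts hq hxr
          have hs1 : sizeOf xr < sizeOf (node XL XR) := sizeOf_lt_of_mem_ropts hxr
          have ih := ((ih (sizeOf (node L R) + sizeOf xr) (by omega) (node L R) xr le_rfl hgap ⟨!q, hxw⟩).1 hHe hLn).1
          have h2 := Rout_le_of_mem_ropts (sum_ropts_right (G := node L R) hxr)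
          omega
  · intro hHo hRn
    cases H with
    | int m => exact absurd (int_inv hHo) (by simp)
    | node L R =>
      obtain ⟨hLne, hRne, hLo, hRo⟩ := node_inv hHo
      obtain ⟨hr, hhr, hhrle⟩ := exists_ropts (node L R) hRne
      have hhre : IsWT hr false := by simpa using hRo hr hhr
      have hgap' : ∀ K, Subgame K hr → IsWT K false → K.Rout ≤ K.Lout :=
        fun K hK hKe => hgap K (subgame_trans hK (Subgame.right hhr (Subgame.refl hr))) hKe
      have hs1 : sizeOf hr < sizeOf (node L R) := sizeOf_lt_of_mem_ropts hhr
      have ih := ((ih (sizeOf hr + sizeOf X) (by omega) hr X le_rfl hgap' ⟨q, hq⟩).1 hhre (le_trans hhrle hRn)).1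
      have h2 := Rout_le_of_mem_ropts (sum_ropts_left (X := X) hhr)
      omega
theorem pq (n : ℤ) (H X : WT)
    (hgap : ∀ K, Subgame K H → IsWT K false → K.Rout ≤ K.Lout) (hX : X.Wt) :
    (IsWT H false → H.Lout ≤ n →
      (H.add X).Lout ≤ n + X.Lout ∧ (H.add X).Rout ≤ n + X.Rout) ∧
    (IsWT H true → H.Rout ≤ n → (H.add X).Rout ≤ n + X.Lout) :=
  pq_aux n (sizeOf H + sizeOf X) H X le_rfl hgap hX

/-! ### the tempo game and the parity lemma -/

def Zg : WT := node [int (-1)] [int 1]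

theorem Zg_eq : Zg = node [int (-1)] [int 1] := rfl

theorem Zg_wt : IsWT Zg true := by
  have h : IsWT (node [int (-1)] [int 1]) (!false) :=
    IsWT.node (by simp) (by simp)
      (by intro g hg; simp at hg; subst hg; exact IsWT.int _)
      (by intro g hg; simp at hg; subst hg; exact IsWT.int _)
  simpa [Zg] using h

theorem Zg_Lout : Zg.Lout = -1 := by
  rw [Zg_eq, Lout_node]
  simp [lmax, Rout_int]

theorem zlem : ∀ H : WT, (∀ K, Subgame K H → IsWT K false → K.Rout ≤ K.Lout) →
    (IsWT H false → H.Rout + 1 ≤ (H.add Zg).Rout) ∧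
    (IsWT H true → H.Lout + 1 ≤ (H.add Zg).Lout) := by
  intro H
  induction H using rec' with
  | hi m =>
    intro _
    constructor
    · intro _
      have hcalc : (int m).add Zg = node [int (m + -1)] [int (m + 1)] := by
        rw [Zg_eq, add_node_right]
        simp [lopts, ropts, add_int_int]
      rw [hcalc, Rout_node, Rout_int]
      simp [lmin, Lout_int]
    · intro h
      exact absurd (int_inv h) (by simp)
  | hn L R ihL ihR =>
    intro hgap
    constructor
    · intro he
      obtain ⟨hLne, hRne, hLo, hRo⟩ := node_inv he
      apply le_Rout_add (Or.inr (by rw [Zg_eq]; simp [ropts]))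
      · intro g hg
        have hgo : IsWT g true := by simpa using hRo g hg
        have hih := (ihR g hg (fun K hK hKe =>
          hgap K (subgame_trans hK (Subgame.right hg (Subgame.refl g))) hKe)).2 hgo
        have h2 := Rout_le_of_mem_ropts (G := node L R) hg
        omega
      · intro x hx
        have hx1 : x = int 1 := by rw [Zg_eq] at hx; simpa [ropts] using hx
        subst hx1
        have h3 := (out_add_int he 1).1
        have h4 := hgap _ (Subgame.refl _) he
        omega
    · intro ho
      obtain ⟨hLne, hRne, hLo, hRo⟩ := node_inv ho
      obtain ⟨gl, hgl, hglle⟩ := exists_lopts (node L R) hLne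
      have hgle : IsWT gl false := by simpa using hLo gl hgl
      have h1 := (ihL gl hgl (fun K hK hKe =>
        hgap K (subgame_trans hK (Subgame.left hgl (Subgame.refl gl))) hKe)).1 hgle
      have h2 := le_Lout_of_mem_lopts (sum_lopts_left (X := Zg) hgl)
      omega

/-! ### the main theorem -/

theorem canonical_int' (G : WT) (hG : G.Wt)
    (h0 : G.gap false = ((0 : ℤ) : WithBot ℤ))
    (hc : WT.Canonical G) (n : ℤ) (he : WT.Equiv G (WT.int n)) :
    G = WT.int n := by
  obtain ⟨p, hp⟩ := hG
  have hgap : ∀ K, Subgame K G → IsWT K false → K.Rout ≤ K.Lout := even_gap h0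
  have hLG : G.Lout = n := by
    have h := (he (int 0) ⟨false, IsWT.int 0⟩).1
    rw [(out_add_int hp 0).1, add_int_int, Lout_int] at h
    omega
  have hpf : IsWT G false := by
    cases p with
    | false => exact hp
    | true =>
      exfalso
      have h1 := (zlem G hgap).2 hp
      have h2 := (he Zg ⟨true, Zg_wt⟩).1
      have h3 := (out_int_add Zg_wt n).1
      have h4 := Zg_Lout
      omega
  clear hp
  cases G with
  | int m =>
    rw [Lout_int] at hLG
    rw [hLG]
  | node L R =>
    exfalso
    obtain ⟨hLne, hRne, hLo', hRo'⟩ := node_inv hpf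
    have hLo : ∀ g ∈ L, IsWT g true := fun g hg => by simpa using hLo' g hg
    have hmir : (0:ℤ) ≤ ((int n).add (node L R).neg).Rout := by
      rw [← (he (node L R).neg ⟨false, IsWT_neg hpf⟩).2]
      exact mirror _
    obtain ⟨gl, hgl⟩ := List.exists_mem_of_ne_nil L hLne
    have hglo : IsWT gl true := hLo gl hgl
    have h3 : (0:ℤ) ≤ ((int n).add gl.neg).Lout := by
      have hmem : gl.neg ∈ (node L R).neg.ropts := by
        rw [neg_node]
        exact List.mem_map.mpr ⟨gl, hgl, rfl⟩
      exact le_trans hmir (Rout_le_of_mem_ropts (sum_ropts_right hmem))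
    cases gl with
    | int m' => exact absurd (int_inv hglo) (by simp)
    | node Lg Rg =>
      obtain ⟨hLgne, hRgne, hLge', hRge'⟩ := node_inv hglo
      have hnegl : (node Lg Rg).neg = node (Rg.map neg) (Lg.map neg) := neg_node _ _
      have hlne : ((int n).add (node Lg Rg).neg).lopts ≠ [] := by
        rw [hnegl, add_node_right]
        simp only [lopts, List.map_nil, List.nil_append, ne_eq, List.map_eq_nil_iff]
        exact hRgne
      obtain ⟨y, hy, hyle⟩ := exists_lopts ((int n).add (node Lg Rg).neg) hlne
      rw [hnegl, add_node_right] at hy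
      simp only [lopts, List.map_nil, List.nil_append, List.map_map, List.mem_map,
        Function.comp] at hy
      obtain ⟨glr, hglr, rfl⟩ := hy
      have hglre : IsWT glr false := by simpa using hRge' glr hglr
      have h5 : (0:ℤ) ≤ ((int n).add glr.neg).Rout := le_trans h3 hyle
      have h6 : glr.Lout ≤ n := by
        have ha := (out_int_add (IsWT_neg hglre) n).2
        have hb := (out_neg glr).2
        omega
      have hsub : Subgame glr (node L R) :=
        Subgame.left hgl (Subgame.right hglr (Subgame.refl glr))
      have hgap2 : ∀ K, Subgame K glr → IsWT K false → K.Rout ≤ K.Lout :=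
        fun K hK hKe => hgap K (subgame_trans hK hsub) hKe
      have hle : Le glr (node L R) := by
        intro X hX
        obtain ⟨q, hq⟩ := hX
        have hp1 := (pq n glr X hgap2 ⟨q, hq⟩).1 hglre h6
        have hp2 := he X ⟨q, hq⟩
        have hp3 := out_int_add hq n
        constructor
        · rw [hp2.1, hp3.1]; omega
        · rw [hp2.2, hp3.2]; omega
      have hnb := hc (node L R) (Subgame.refl _)
      exact ((hnb.1 (node Lg Rg) hgl).1) ⟨glr, hglr, hle⟩

end WT

/-- a canonical well-tempered game in J (gap₀ = 0, gap₁ ≤ 2) that is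
equivalent to an integer n is literally the integer n. -/
theorem canonical_int (G : WT) (hG : G.Wt)
    (h0 : G.gap false = ((0 : ℤ) : WithBot ℤ)) (h1 : G.gap true ≤ ((2 : ℤ) : WithBot ℤ))
    (hc : WT.Canonical G) (n : ℤ) (he : WT.Equiv G (WT.int n)) :
    G = WT.int n := by
  exact WT.canonical_int' G hG h0 hc n he
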